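/- Let F be a finite field, H ≤ F^× a multiplicative subgroup, and ψ a nontrivial additive character of F. Then |Σ_{x∈H} ψ(x)| ≤ √|F|. Consequently if |H| ≥ |F|^{1/2+α} for some α ∈ (0,1/2), then |(1/|H|) Σ_{x∈H} ψ(x)| ≤ |F|^{-α}. -/

import Mathlib

/-- For a multiplicative subgroup `H ≤ F^×` of a finite field `F` and a
nontrivial additive character `ψ`, one has `|∑_{x∈H} ψ(x)| ≤ √|F|`; consequently if
`|H| ≥ |F|^(1/2+α)` with `α ∈ (0,1/2)`, the normalized sum is at most `|F|^(-α)`. -/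
theorem stmt2 {F : Type*} [Field F] [Fintype F] [DecidableEq F]
    (H : Subgroup Fˣ) [Fintype H] (ψ : AddChar F ℂ) (hψ : ψ ≠ 1) :
    ‖∑ x : H, ψ (((x : Fˣ) : F))‖ ≤ Real.sqrt (Fintype.card F) ∧
      ∀ α : ℝ, α ∈ Set.Ioo (0 : ℝ) (1/2) →
        ((Fintype.card F : ℝ) ^ ((1:ℝ)/2 + α) ≤ (Fintype.card H : ℝ)) →
        ‖(1 / (Fintype.card H : ℂ)) * ∑ x : H, ψ (((x : Fˣ) : F))‖
          ≤ (Fintype.card F : ℝ) ^ (-α) := by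
  have hprim : ψ.IsPrimitive := AddChar.IsPrimitive.of_ne_one hψ
  set S : ℂ := ∑ x : H, ψ (((x : Fˣ) : F)) with hSdef
  set f : F → ℂ := fun c => ∑ x : H, ψ (c * ((x : Fˣ) : F)) with hfdef
  have hHpos : (0:ℝ) < Fintype.card H := by
    exact_mod_cast Fintype.card_pos
  have hFpos : (0:ℝ) < Fintype.card F := by
    exact_mod_cast Fintype.card_pos
  -- Plancherel: ∑_{c∈F} ‖f c‖² = |F| |H|
  have plancherel : ∑ c : F, ‖f c‖ ^ 2 = (Fintype.card F : ℝ) * (Fintype.card H : ℝ) := by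
    have hC : ∑ c : F, ((‖f c‖ : ℂ)) ^ 2
        = (Fintype.card F : ℂ) * (Fintype.card H : ℂ) := by
      have step : ∀ c : F, ((‖f c‖ : ℂ)) ^ 2
          = ∑ x : H, ∑ y : H, ψ (c * (((y : Fˣ) : F) - ((x : Fˣ) : F))) := by
        intro c
        have h1 : ((‖f c‖ : ℂ)) ^ 2 = f c * (starRingEnd ℂ) (f c) := by
          rw [Complex.mul_conj]
          norm_cast
          rw [← Complex.sq_norm]
        rw [h1, hfdef]
        simp only [map_sum, Finset.sum_mul, Finset.mul_sum]
        refine Finset.sum_congr rfl fun x _ => Finset.sum_congr rfl fun y _ => ?_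
        rw [← AddChar.map_neg_eq_conj, ← AddChar.map_add_eq_mul]
        congr 1
        ring
      simp_rw [step]
      rw [Finset.sum_comm]
      have inner : ∀ x : H, ∑ c : F, ∑ y : H,
          ψ (c * (((y : Fˣ) : F) - ((x : Fˣ) : F))) = (Fintype.card F : ℂ) := by
        intro x
        rw [Finset.sum_comm]
        have h2 : ∀ y : H, ∑ c : F, ψ (c * (((y : Fˣ) : F) - ((x : Fˣ) : F)))
            = if ((y : Fˣ) : F) - ((x : Fˣ) : F) = 0 then (Fintype.card F : ℂ) else 0 :=
          fun y => by
            rw [AddChar.sum_mulShift _ hprim, apply_ite (Nat.cast : ℕ → ℂ), Nat.cast_zero]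
        simp_rw [h2, sub_eq_zero]
        have h3 : ∀ y : H, (((y : Fˣ) : F) = ((x : Fˣ) : F)) ↔ x = y := by
          intro y
          constructor
          · intro h; exact (Subtype.ext (Units.ext h)).symm
          · intro h; rw [h]
        simp_rw [h3]
        simp
      rw [Finset.sum_congr rfl fun x _ => inner x]
      simp [Finset.card_univ, mul_comm]
    exact_mod_cast hC
  -- for u ∈ H, f u = S
  have hfu : ∀ u : H, f ((u : Fˣ) : F) = S := by
    intro u
    rw [hfdef, hSdef]
    refine Fintype.sum_equiv (Equiv.mulLeft u) _ _ fun x => ?_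
    simp [Units.val_mul]
  -- key inequality
  have hinj : Function.Injective (fun u : H => ((u : Fˣ) : F)) := by
    intro a b hab
    exact Subtype.ext (Units.ext hab)
  have key2 : (Fintype.card H : ℝ) * ‖S‖ ^ 2 ≤ (Fintype.card F : ℝ) * (Fintype.card H : ℝ) := by
    rw [← plancherel]
    calc (Fintype.card H : ℝ) * ‖S‖ ^ 2
        = ∑ u : H, ‖f ((u : Fˣ) : F)‖ ^ 2 := by
          simp [hfu, Finset.card_univ, mul_comm]
      _ = ∑ c ∈ (Finset.univ : Finset H).image (fun u : H => ((u : Fˣ) : F)), ‖f c‖ ^ 2 := by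
          rw [Finset.sum_image (fun a _ b _ h => hinj h)]
      _ ≤ ∑ c : F, ‖f c‖ ^ 2 := by
          refine Finset.sum_le_sum_of_subset_of_nonneg (Finset.subset_univ _) ?_
          intro i _ _
          positivity
  have hS2 : ‖S‖ ^ 2 ≤ (Fintype.card F : ℝ) := by
    have := (mul_le_mul_iff_of_pos_right hHpos).mp (by linarith [key2] : ‖S‖ ^ 2 * (Fintype.card H : ℝ) ≤ (Fintype.card F : ℝ) * (Fintype.card H : ℝ))
    exact this
  have key : ‖S‖ ≤ Real.sqrt (Fintype.card F) :=
    (Real.le_sqrt (norm_nonneg _) hFpos.le).mpr hS2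
  refine ⟨key, ?_⟩
  intro α hα hH
  have hF1 : (1:ℝ) ≤ (Fintype.card F : ℝ) := by exact_mod_cast Fintype.card_pos
  have hpow : (0:ℝ) < (Fintype.card F : ℝ) ^ ((1:ℝ)/2 + α) := Real.rpow_pos_of_pos hFpos _
  have hnorm : ‖(1 / (Fintype.card H : ℂ)) * S‖ = ‖S‖ / (Fintype.card H : ℝ) := by
    rw [norm_mul, norm_div, norm_one, Complex.norm_natCast, one_div, inv_mul_eq_div]
  rw [hnorm]
  calc ‖S‖ / (Fintype.card H : ℝ)
      ≤ Real.sqrt (Fintype.card F) / ((Fintype.card F : ℝ) ^ ((1:ℝ)/2 + α)) := by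
        exact div_le_div₀ (Real.sqrt_nonneg _) key hpow hH
    _ = (Fintype.card F : ℝ) ^ (-α) := by
        rw [Real.sqrt_eq_rpow, ← Real.rpow_sub hFpos]
        ring_nf
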